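/- Continuity of the dual objective along almost surely convergent sequences: let y > 0 and let (ξₙ)_{n≥1} be nonnegative F-measurable random variables converging almost surely to a random variable ξ. Then lim_{n→∞} E[Ũ(y·ξₙ(·),·)] = E[Ũ(y·ξ(·),·)]. -/

import Mathlib

open MeasureTheory Set Filter
open scoped ENNReal NNReal Topology

/-- The convex dual `Ũ(y) := sup_{0 ≤ z ≤ H} (U(z) − y·z)` (for a fixed state). -/
noncomputable def dualU (U : ℝ → ℝ) (H y : ℝ) : ℝ :=
  sSup ((fun z => U z - y * z) '' Set.Icc 0 H)

/-- `min(I(y), H)`, where `I(y) := inf{ z ∈ (0,H) : U'(z) < y }` with the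
conventions `inf ∅ = +∞` and `I(0) = +∞` (so that the minimum with `H`
equals `H` in those cases). -/
noncomputable def IminU (U : ℝ → ℝ) (H y : ℝ) : ℝ :=
  sInf ({z | z ∈ Set.Ioo 0 H ∧ deriv U z < y} ∪ {H})

section aux

variable {U : ℝ → ℝ} {H a b : ℝ}

lemma dual_nonempty (hH : 0 ≤ H) :
    ((fun z => U z - a * z) '' Set.Icc 0 H).Nonempty :=
  ⟨U 0 - a * 0, 0, ⟨le_refl 0, hH⟩, rfl⟩

lemma dual_bddAbove (hH : 0 ≤ H) (hmono : MonotoneOn U (Set.Ici 0)) :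
    BddAbove ((fun z => U z - a * z) '' Set.Icc 0 H) := by
  refine ⟨U H + |a| * H, ?_⟩
  rintro x ⟨z, ⟨hz0, hzH⟩, rfl⟩
  have h1 : U z ≤ U H := hmono hz0 (hz0.trans hzH) hzH
  have h2 : -(a * z) ≤ |a| * H := by
    have : |a * z| ≤ |a| * H := by
      rw [abs_mul]
      exact mul_le_mul_of_nonneg_left (by rwa [abs_of_nonneg hz0]) (abs_nonneg a)
    linarith [neg_abs_le (a * z)]
  simp only
  linarith

lemma le_dual (hH : 0 ≤ H) (hmono : MonotoneOn U (Set.Ici 0)) :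
    U 0 ≤ dualU U H a := by
  have := le_csSup (dual_bddAbove hH hmono (a := a)) ⟨0, ⟨le_refl 0, hH⟩, rfl⟩
  simpa [dualU] using this

lemma dual_le (hH : 0 ≤ H) (hmono : MonotoneOn U (Set.Ici 0)) (ha : 0 ≤ a) :
    dualU U H a ≤ U H := by
  apply csSup_le (dual_nonempty hH)
  rintro x ⟨z, ⟨hz0, hzH⟩, rfl⟩
  have h1 : U z ≤ U H := hmono hz0 (hz0.trans hzH) hzH
  have h2 : 0 ≤ a * z := mul_nonneg ha hz0
  simp only
  linarith

lemma dual_lip (hH : 0 ≤ H) (hmono : MonotoneOn U (Set.Ici 0)) :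
    dualU U H a ≤ dualU U H b + H * |a - b| := by
  apply csSup_le (dual_nonempty hH)
  rintro x ⟨z, hz, rfl⟩
  obtain ⟨hz0, hzH⟩ := hz
  have h1 : U z - b * z ≤ dualU U H b :=
    le_csSup (dual_bddAbove hH hmono) ⟨z, ⟨hz0, hzH⟩, rfl⟩
  have h2 : (b - a) * z ≤ H * |a - b| := by
    calc (b - a) * z ≤ |b - a| * z := mul_le_mul_of_nonneg_right (le_abs_self _) hz0
    _ ≤ |b - a| * H := mul_le_mul_of_nonneg_left hzH (abs_nonneg _)
    _ = H * |a - b| := by rw [abs_sub_comm, mul_comm]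
  simp only
  linarith

/-- rational supremum representation of the dual -/
lemma dual_eq_iSup (hH : 0 < H) (hmono : MonotoneOn U (Set.Ici 0))
    (hcont : ContinuousOn U (Set.Ici 0)) :
    dualU U H a =
      ⨆ q : ℚ, (if 0 ≤ (q : ℝ) ∧ (q : ℝ) < H then U q - a * q else U 0) := by
  set f : ℝ → ℝ := fun z => U z - a * z with hf
  set F : ℚ → ℝ := fun q => if 0 ≤ (q : ℝ) ∧ (q : ℝ) < H then U q - a * q else U 0 with hF
  have hFmem : ∀ q, F q ∈ f '' Set.Icc 0 H := by
    intro q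
    by_cases h : 0 ≤ (q : ℝ) ∧ (q : ℝ) < H
    · rw [hF]; simp only [if_pos h]
      exact ⟨q, ⟨h.1, h.2.le⟩, rfl⟩
    · rw [hF]; simp only [if_neg h]
      exact ⟨0, ⟨le_refl 0, hH.le⟩, by simp [hf]⟩
  have hbdd : BddAbove (Set.range F) :=
    (dual_bddAbove hH.le hmono).mono (range_subset_iff.2 hFmem)
  have hfcont : ContinuousOn f (Set.Icc 0 H) := by
    apply ContinuousOn.sub (hcont.mono (Icc_subset_Ici_self))
    exact (continuous_const.mul continuous_id).continuousOn
  apply le_antisymm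
  · -- sSup ≤ iSup
    apply csSup_le (dual_nonempty hH.le)
    rintro x ⟨z, ⟨hz0, hzH⟩, rfl⟩
    show f z ≤ ⨆ q, F q
    rcases eq_or_lt_of_le hz0 with hz0' | hz0'
    · -- z = 0 : use q = -1
      rw [← hz0']
      have h1 : F (-1) = f 0 := by
        show (if 0 ≤ ((-1:ℚ):ℝ) ∧ ((-1:ℚ):ℝ) < H then U ((-1:ℚ):ℝ) - a * ((-1:ℚ):ℝ) else U 0) = f 0
        norm_num [hf]
      calc f 0 = F (-1) := h1.symm
        _ ≤ ⨆ q, F q := le_ciSup hbdd (-1)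
    · -- z > 0 : approximate from below by rationals in (0, z)
      have hseq : ∀ n : ℕ, ∃ q : ℚ, max 0 (z - 1/(n+1)) < (q:ℝ) ∧ (q:ℝ) < z := by
        intro n
        apply exists_rat_btwn
        apply max_lt hz0'
        have : (0:ℝ) < 1/(n+1) := by positivity
        linarith
      choose q hq1 hq2 using hseq
      have hq0 : ∀ n, 0 ≤ ((q n : ℝ)) := fun n => (le_max_left _ _).trans (hq1 n).le
      have hqH : ∀ n, ((q n : ℝ)) < H := fun n => (hq2 n).trans_le hzH
      have hqIcc : ∀ n, ((q n : ℝ)) ∈ Set.Icc 0 H := fun n => ⟨hq0 n, (hqH n).le⟩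
      have htend : Tendsto (fun n => ((q n : ℝ))) atTop (nhds z) := by
        have hlow : Tendsto (fun n : ℕ => z - 1/(n+1:ℝ)) atTop (nhds z) := by
          have : Tendsto (fun n : ℕ => 1/(n+1:ℝ)) atTop (nhds 0) :=
            tendsto_one_div_add_atTop_nhds_zero_nat
          simpa using tendsto_const_nhds.sub this
        apply tendsto_of_tendsto_of_tendsto_of_le_of_le hlow tendsto_const_nhds
        · intro n
          exact ((le_max_right 0 (z - 1/(n+1))).trans (hq1 n).le)
        · intro n; exact (hq2 n).le
      have hftend : Tendsto (fun n => f (q n)) atTop (nhds (f z)) := by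
        have hcw : ContinuousWithinAt f (Set.Icc 0 H) z := hfcont z ⟨hz0, hzH⟩
        exact hcw.tendsto.comp
          (tendsto_nhdsWithin_of_tendsto_nhds_of_eventually_within _ htend
            (Eventually.of_forall hqIcc))
      apply le_of_tendsto hftend
      filter_upwards with n
      have heq : F (q n) = f (q n) := by
        show (if 0 ≤ ((q n:ℚ):ℝ) ∧ ((q n:ℚ):ℝ) < H then U (q n) - a * (q n) else U 0) = f (q n)
        rw [if_pos ⟨hq0 n, hqH n⟩]
      calc f (q n) = F (q n) := heq.symm
        _ ≤ ⨆ q, F q := le_ciSup hbdd (q n)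
  · -- iSup ≤ sSup
    apply ciSup_le
    intro q
    exact le_csSup (dual_bddAbove hH.le hmono) (hFmem q)

end aux

/-- Continuity of the dual objective along almost surely convergent sequences:
if `ξₙ → ξ` a.s., then `E[Ũ(y·ξₙ(·),·)] → E[Ũ(y·ξ(·),·)]`. -/
theorem stmt17 {Ω : Type*} [MeasurableSpace Ω] (μ : Measure Ω) [IsProbabilityMeasure μ]
    (H : Ω → ℝ) (hHmeas : Measurable H) (hHpos : ∀ ω, 0 < H ω)
    (U : Ω → ℝ → ℝ)
    (hU0 : ∀ ω, ∀ z, 0 ≤ z → 0 ≤ U ω z)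
    (hUmono : ∀ ω, MonotoneOn (U ω) (Set.Ici 0))
    (hUcont : ∀ ω, ContinuousOn (U ω) (Set.Ici 0))
    (hUconc : ∀ ω, StrictConcaveOn ℝ (Set.Ioo 0 (H ω)) (U ω))
    (hUdiff : ∀ ω, ∀ z ∈ Set.Ioo 0 (H ω), DifferentiableAt ℝ (U ω) z)
    (hUcap : ∀ ω, ∀ w, 0 ≤ w → U ω w = U ω (min w (H ω)))
    (hUmeas : ∀ z, Measurable fun ω => U ω z)
    (hUint : Integrable (fun ω => U ω (H ω)) μ)
    (y : ℝ) (hy : 0 < y)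
    (ξn : ℕ → Ω → ℝ) (hξnmeas : ∀ n, Measurable (ξn n))
    (hξnpos : ∀ n ω, 0 ≤ ξn n ω)
    (ξ : Ω → ℝ)
    (hconv : ∀ᵐ ω ∂μ, Tendsto (fun n => ξn n ω) atTop (nhds (ξ ω))) :
    Tendsto (fun n => ∫ ω, dualU (U ω) (H ω) (y * ξn n ω) ∂μ) atTop
      (nhds (∫ ω, dualU (U ω) (H ω) (y * ξ ω) ∂μ)) := by
  -- measurability of the integrands
  have hmeas : ∀ (g : Ω → ℝ), Measurable g →
      Measurable (fun ω => dualU (U ω) (H ω) (y * g ω)) := by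
    intro g hg
    have heq : (fun ω => dualU (U ω) (H ω) (y * g ω)) =
        fun ω => ⨆ q : ℚ,
          (if 0 ≤ (q : ℝ) ∧ (q : ℝ) < H ω then U ω q - (y * g ω) * q else U ω 0) := by
      funext ω
      exact dual_eq_iSup (hHpos ω) (hUmono ω) (hUcont ω)
    rw [heq]
    apply Measurable.iSup
    intro q
    have hset : MeasurableSet {ω | 0 ≤ (q : ℝ) ∧ (q : ℝ) < H ω} := by
      have : {ω | 0 ≤ (q : ℝ) ∧ (q : ℝ) < H ω}
          = {ω | 0 ≤ (q : ℝ)} ∩ {ω | (q : ℝ) < H ω} := rfl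
      rw [this]
      exact (MeasurableSet.const _).inter (measurableSet_lt measurable_const hHmeas)
    exact Measurable.ite hset
      ((hUmeas q).sub (((measurable_const.mul hg)).mul measurable_const))
      (hUmeas 0)
  -- bounds
  have hbound : ∀ (g : Ω → ℝ), (∀ ω, 0 ≤ g ω) →
      ∀ ω, ‖dualU (U ω) (H ω) (y * g ω)‖ ≤ U ω (H ω) := by
    intro g hg ω
    have ha : 0 ≤ y * g ω := mul_nonneg hy.le (hg ω)
    have h1 : 0 ≤ dualU (U ω) (H ω) (y * g ω) :=
      (hU0 ω 0 le_rfl).trans (le_dual (hHpos ω).le (hUmono ω))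
    rw [Real.norm_eq_abs, abs_of_nonneg h1]
    exact dual_le (hHpos ω).le (hUmono ω) ha
  -- pointwise convergence
  have hlim : ∀ᵐ ω ∂μ, Tendsto (fun n => dualU (U ω) (H ω) (y * ξn n ω)) atTop
      (nhds (dualU (U ω) (H ω) (y * ξ ω))) := by
    filter_upwards [hconv] with ω hω
    have h1 : Tendsto (fun n => y * ξn n ω) atTop (nhds (y * ξ ω)) := hω.const_mul y
    have h2 : Tendsto (fun n => H ω * |y * ξn n ω - y * ξ ω|) atTop (nhds 0) := by
      have := ((h1.sub (tendsto_const_nhds (x := y * ξ ω))).abs).const_mul (H ω)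
      simpa using this
    rw [tendsto_iff_dist_tendsto_zero]
    simp only [Real.dist_eq]
    apply squeeze_zero (fun n => abs_nonneg _) _ h2
    intro n
    rw [abs_sub_le_iff]
    constructor
    · have := dual_lip (U := U ω) (a := y * ξn n ω) (b := y * ξ ω) (hHpos ω).le (hUmono ω)
      linarith
    · have := dual_lip (U := U ω) (a := y * ξ ω) (b := y * ξn n ω) (hHpos ω).le (hUmono ω)
      rw [abs_sub_comm (y * ξ ω) (y * ξn n ω)] at this
      linarith
  exact tendsto_integral_of_dominated_convergence (fun ω => U ω (H ω))
    (fun n => (hmeas (ξn n) (hξnmeas n)).aestronglyMeasurable) hUint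
    (fun n => Eventually.of_forall (hbound (ξn n) (hξnpos n))) hlim
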